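/- Let $A$ be a Noetherian local ring and let $\mathfrak{D}$ be a set of higher derivations of $A$, i.e., sequences $D = (D_0, D_1, D_2, \dots)$ of additive endomorphisms of $A$ with $D_0$ the identity and $D_n(ab) = \sum_{i+j=n} D_i(a) D_j(b)$ for all $n \geq 0$ and $a, b \in A$. Let $I$ be a proper ideal of $A$ that is maximally $\mathfrak{D}$-differential. Then $A$ is normally flat along $I$; that is, for every $n \geq 0$, the $A/I$-module $I^n/I^{n+1}$ is free. -/

import Mathlib

/-- `D` is a higher (Hasse–Schmidt) derivation of the commutative ring `A`: a sequence
`(D₀, D₁, D₂, …)` of additive endomorphisms of `A` with `D₀` the identity and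
`Dₙ(ab) = ∑_{i+j=n} Dᵢ(a)·Dⱼ(b)` for all `n ≥ 0` and `a, b ∈ A`. -/
def IsHigherDeriv {A : Type*} [CommRing A] (D : ℕ → A →+ A) : Prop :=
  D 0 = AddMonoidHom.id A ∧
    ∀ (n : ℕ) (a b : A), D n (a * b) = ∑ i ∈ Finset.range (n + 1), D i a * D (n - i) b

/-- An ideal `I` is `𝔇`-differential for a set `𝔇` of higher derivations if `Dₙ(I) ⊆ I` for all
`D ∈ 𝔇` and all `n ≥ 0`. -/
def IsHDiffIdeal {A : Type*} [CommRing A] (𝔇 : Set (ℕ → A →+ A)) (I : Ideal A) : Prop :=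
  ∀ D ∈ 𝔇, ∀ n : ℕ, ∀ x ∈ I, D n x ∈ I

/-- An ideal `I` is maximally `𝔇`-differential if it is a proper `𝔇`-differential ideal and no
ideal `J` with `I ⊊ J ⊊ A` is `𝔇`-differential. -/
def IsMaxHDiffIdeal {A : Type*} [CommRing A] (𝔇 : Set (ℕ → A →+ A)) (I : Ideal A) : Prop :=
  I ≠ ⊤ ∧ IsHDiffIdeal 𝔇 I ∧ ∀ J : Ideal A, I < J → J < ⊤ → ¬ IsHDiffIdeal 𝔇 J

namespace HDAux

open PowerSeries

variable {A : Type*} [CommRing A]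

theorem hd_zero {D : ℕ → A →+ A} (hD : IsHigherDeriv D) (a : A) : D 0 a = a := by
  rw [hD.1]; rfl

theorem hd_one {D : ℕ → A →+ A} (hD : IsHigherDeriv D) {n : ℕ} (hn : n ≠ 0) : D n 1 = 0 := by
  induction n using Nat.strong_induction_on with
  | _ n ih =>
    have h := hD.2 n 1 1
    rw [mul_one] at h
    rcases Nat.exists_eq_succ_of_ne_zero hn with ⟨k, rfl⟩
    rw [Finset.sum_range_succ', Finset.sum_range_succ] at h
    have hmid : ∀ i ∈ Finset.range k, D (i+1) 1 * D (k + 1 - (i+1)) 1 = 0 := by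
      intro i hi
      rw [ih (i+1) (by simp at hi; omega) (by omega), zero_mul]
    rw [Finset.sum_congr rfl hmid] at h
    simp only [Finset.sum_const, smul_zero, zero_add, Nat.add_sub_cancel, Nat.sub_zero,
      Nat.sub_self, hd_zero hD, mul_one, one_mul] at h
    -- h : D (k+1) 1 = D (k+1) 1 + D (k+1) 1
    exact left_eq_add.mp h

/-- The power series ring homomorphism attached to a higher derivation. -/
noncomputable def phi (D : {D : ℕ → A →+ A // IsHigherDeriv D}) : A →+* PowerSeries A where
  toFun := fun a => PowerSeries.mk fun n => D.1 n a
  map_one' := by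
    obtain ⟨D, hD⟩ := D
    ext n
    rw [coeff_mk, coeff_one]
    rcases eq_or_ne n 0 with rfl | hn
    · simp [hd_zero hD]
    · simp [hn, hd_one hD hn]
  map_mul' := by
    obtain ⟨D, hD⟩ := D
    intro a b
    ext n
    rw [coeff_mk, coeff_mul, hD.2 n a b,
      ← Finset.Nat.sum_antidiagonal_eq_sum_range_succ (fun i j => D i a * D j b)]
    exact Finset.sum_congr rfl fun p _ => by rw [coeff_mk, coeff_mk]
  map_zero' := by ext n; simp
  map_add' := by intro a b; ext n; simp [coeff_mk]

theorem coeff_phi (D : {D : ℕ → A →+ A // IsHigherDeriv D}) (n : ℕ) (a : A) :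
    coeff n (phi D a) = D.1 n a :=
  coeff_mk n fun n => D.1 n a


/-- Coefficientwise ideal of a power series ring. -/
def cw {R : Type*} [CommRing R] (J : Ideal R) : Ideal (PowerSeries R) where
  carrier := {f | ∀ n, coeff n f ∈ J}
  add_mem' := fun ha hb n => by rw [map_add]; exact J.add_mem (ha n) (hb n)
  zero_mem' := fun n => by rw [map_zero]; exact J.zero_mem
  smul_mem' := fun c f hf n => by
    rw [smul_eq_mul, coeff_mul]
    exact Ideal.sum_mem _ fun p _ => J.mul_mem_left _ (hf p.2)

theorem mem_cw {R : Type*} [CommRing R] {J : Ideal R} {f : PowerSeries R} :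
    f ∈ cw J ↔ ∀ n, coeff n f ∈ J := Iff.rfl

theorem cw_mono {R : Type*} [CommRing R] {J J' : Ideal R} (h : J ≤ J') : cw J ≤ cw J' :=
  fun _ hf n => h (hf n)

theorem cw_top {R : Type*} [CommRing R] : cw (⊤ : Ideal R) = ⊤ :=
  eq_top_iff.mpr fun x _ n => trivial

theorem cw_mul_le {R : Type*} [CommRing R] (J J' : Ideal R) : cw J * cw J' ≤ cw (J * J') := by
  rw [Ideal.mul_le]
  intro r hr s hs n
  rw [coeff_mul]
  exact Ideal.sum_mem _ fun p _ => Ideal.mul_mem_mul (hr p.1) (hs p.2)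

universe u

variable {A : Type u} [CommRing A]

/-- A "gadget": a ring `R` (an iterated power series ring over `A` in disguise), together
with a twisted map `Φ` coming from a composite of higher derivations, the constant embedding,
constant-term projections, a residue version, coefficientwise ideals, and all the properties
needed for the normal flatness argument. -/
structure PSG (A : Type u) [CommRing A] (m I : Ideal A) (Pext : A → Prop) :
    Type (u + 1) where
  R : Type u
  [cr : CommRing R]
  Rk : Type u
  [crk : CommRing Rk]
  Φ : A →+* R
  ι : A →+* R
  ρ : R →+* A
  π : R →+* Rk
  ρk : Rk →+* A ⧸ m
  N : Ideal A → Ideal R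
  hNle : ∀ {P Q : Ideal A}, P ≤ Q → N P ≤ N Q
  hNtop : N ⊤ = ⊤
  hNmul : ∀ P Q : Ideal A, N P * N Q ≤ N (P * Q)
  hΦI : ∀ x ∈ I, Φ x ∈ N I
  hρΦ : ∀ x, ρ (Φ x) = x
  hρι : ∀ x, ρ (ι x) = x
  hspan : ∀ (s : ℕ) (v : Fin s → A) (x : R), x ∈ N (Ideal.span (Set.range v)) →
    ∃ c : Fin s → R, x = ∑ j, c j * ι (v j)
  hzero : ∀ (s : ℕ) (v : Fin s → A) (e : Fin s → R),
    (∀ lam : Fin s → A, ∑ j, lam j * v j = 0 → ∀ j, lam j ∈ m) →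
    (∑ j, e j * ι (v j) = 0) → ∀ j, e j ∈ N m
  hunit : ∀ x : Rk, IsUnit (ρk x) → IsUnit x
  hπ0 : ∀ x, π x = 0 ↔ x ∈ N m
  hρkπ : ∀ x, ρk (π x) = Ideal.Quotient.mk m (ρ x)
  hext : ∀ x : A, Φ x ∈ N m → Pext x

/-- The base gadget. -/
noncomputable def PSG.base (m I : Ideal A) : PSG A m I (fun x => x ∈ m) where
  R := A
  Rk := A ⧸ m
  Φ := RingHom.id A
  ι := RingHom.id A
  ρ := RingHom.id A
  π := Ideal.Quotient.mk m
  ρk := RingHom.id (A ⧸ m)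
  N := id
  hNle := fun h => h
  hNtop := rfl
  hNmul := fun P Q => le_rfl
  hΦI := fun x hx => hx
  hρΦ := fun x => rfl
  hρι := fun x => rfl
  hspan := fun s v x hx => by
    obtain ⟨c, hc⟩ := (Submodule.mem_span_range_iff_exists_fun A).mp hx
    exact ⟨c, by simpa [smul_eq_mul] using hc.symm⟩
  hzero := fun s v e hv h0 => by
    simpa using hv e h0
  hunit := fun x h => h
  hπ0 := fun x => Ideal.Quotient.eq_zero_iff_mem
  hρkπ := fun x => rfl
  hext := fun x hx => hx

/-- The inductive step: twist a gadget by one more higher derivation. -/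
noncomputable def PSG.step {m I : Ideal A} {Pext : A → Prop} (G : PSG A m I Pext)
    (D : {D : ℕ → A →+ A // IsHigherDeriv D}) (e : ℕ)
    (hDI : ∀ n, ∀ x ∈ I, D.1 n x ∈ I) :
    PSG A m I (fun x => Pext (D.1 e x)) := by
  letI := G.cr
  letI := G.crk
  refine
  { R := PowerSeries G.R
    Rk := PowerSeries G.Rk
    Φ := (PowerSeries.map G.Φ).comp (HDAux.phi D)
    ι := PowerSeries.C.comp G.ι
    ρ := G.ρ.comp (PowerSeries.constantCoeff)
    π := PowerSeries.map G.π
    ρk := G.ρk.comp (PowerSeries.constantCoeff)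
    N := fun P => cw (G.N P)
    hNle := fun h => cw_mono (G.hNle h)
    hNtop := by show cw (G.N ⊤) = ⊤; rw [G.hNtop, cw_top]
    hNmul := fun P Q => le_trans (cw_mul_le _ _) (cw_mono (G.hNmul P Q))
    hΦI := ?_, hρΦ := ?_, hρι := ?_, hspan := ?_, hzero := ?_, hunit := ?_,
    hπ0 := ?_, hρkπ := ?_, hext := ?_ }
  · -- hΦI
    intro x hx n
    rw [RingHom.comp_apply, coeff_map, coeff_phi]
    exact G.hΦI _ (hDI n x hx)
  · -- hρΦ
    intro x
    rw [RingHom.comp_apply, RingHom.comp_apply, ← coeff_zero_eq_constantCoeff_apply,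
      coeff_map, coeff_phi, hd_zero D.2, G.hρΦ]
  · -- hρι
    intro x
    rw [RingHom.comp_apply, RingHom.comp_apply, constantCoeff_C, G.hρι]
  · -- hspan
    intro s v x hx
    choose c hc using fun n => G.hspan s v _ (hx n)
    refine ⟨fun j => PowerSeries.mk fun n => c n j, ?_⟩
    ext n
    rw [hc n, map_sum]
    refine Finset.sum_congr rfl fun j _ => ?_
    rw [RingHom.comp_apply, coeff_mul_C, coeff_mk]
  · -- hzero
    intro s v e hv h0 j n
    refine G.hzero s v (fun i => coeff n (e i)) hv ?_ j
    have := congrArg (coeff n) h0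
    rw [map_sum, map_zero] at this
    rw [← this]
    refine Finset.sum_congr rfl fun i _ => ?_
    rw [RingHom.comp_apply, coeff_mul_C]
  · -- hunit
    intro x h
    rw [RingHom.comp_apply] at h
    obtain ⟨uu, huu⟩ := G.hunit _ h
    exact IsUnit.of_mul_eq_one _ (PowerSeries.mul_invOfUnit x uu huu.symm)
  · -- hπ0
    intro x
    constructor
    · intro h n
      have := congrArg (coeff n) h
      rw [coeff_map, map_zero] at this
      exact (G.hπ0 _).mp this
    · intro h
      ext n
      rw [coeff_map, map_zero]
      exact (G.hπ0 _).mpr (h n)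
  · -- hρkπ
    intro x
    rw [RingHom.comp_apply, RingHom.comp_apply,
      ← coeff_zero_eq_constantCoeff_apply, coeff_map, coeff_zero_eq_constantCoeff_apply,
      G.hρkπ]
  · -- hext
    intro x hx
    refine G.hext (D.1 e x) ?_
    have := hx e
    rwa [RingHom.comp_apply, coeff_map, coeff_phi] at this


section CompPart

variable (𝔇 : Set (ℕ → A →+ A)) (m : Ideal A)

/-- Composite of finitely many components of higher derivations, applied head-first. -/
def Comp : List ((ℕ → A →+ A) × ℕ) → A →+ A
  | [] => AddMonoidHom.id A
  | p :: L => (Comp L).comp (p.1 p.2)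

theorem Comp_cons (p : (ℕ → A →+ A) × ℕ) (L : List ((ℕ → A →+ A) × ℕ)) (a : A) :
    Comp (p :: L) a = Comp L (p.1 p.2 a) := rfl

/-- The largest `𝔇`-differential ideal contained in `m`, as a set. -/
def JC : Set A :=
  {a | ∀ L : List ((ℕ → A →+ A) × ℕ), (∀ p ∈ L, p.1 ∈ 𝔇) → Comp L a ∈ m}

theorem JC_diff {a : A} (ha : a ∈ JC 𝔇 m) {D : ℕ → A →+ A} (hD : D ∈ 𝔇) (e : ℕ) :
    D e a ∈ JC 𝔇 m := by
  intro L hL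
  have := ha ((D, e) :: L) (by
    intro p hp
    rcases List.mem_cons.mp hp with h | h
    · rw [h]; exact hD
    · exact hL p h)
  rwa [Comp_cons] at this

theorem JC_mul (h𝔇 : ∀ D ∈ 𝔇, IsHigherDeriv D) :
    ∀ L : List ((ℕ → A →+ A) × ℕ), (∀ p ∈ L, p.1 ∈ 𝔇) → ∀ c a : A, a ∈ JC 𝔇 m →
      Comp L (c * a) ∈ m := by
  intro L
  induction L with
  | nil =>
    intro _ c a ha
    exact m.mul_mem_left c (ha [] (by simp))
  | cons p L ih =>
    intro hL c a ha
    have hvalid : ∀ q ∈ L, q.1 ∈ 𝔇 := fun q hq => hL q (List.mem_cons_of_mem p hq)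
    have hp1 : p.1 ∈ 𝔇 := hL p List.mem_cons_self
    rw [Comp_cons, (h𝔇 p.1 hp1).2 p.2 c a, map_sum]
    exact Ideal.sum_mem _ fun i _ =>
      ih hvalid (p.1 i c) (p.1 (p.2 - i) a) (JC_diff 𝔇 m ha hp1 _)

theorem Comp_mem_of_diff {I : Ideal A} (hdiff : IsHDiffIdeal 𝔇 I) :
    ∀ L : List ((ℕ → A →+ A) × ℕ), (∀ p ∈ L, p.1 ∈ 𝔇) → ∀ x ∈ I, Comp L x ∈ I := by
  intro L
  induction L with
  | nil => exact fun _ x hx => hx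
  | cons p L ih =>
    intro hL x hx
    rw [Comp_cons]
    exact ih (fun q hq => hL q (List.mem_cons_of_mem p hq))
      _ (hdiff p.1 (hL p List.mem_cons_self) p.2 x hx)

/-- For a maximally differential ideal in a local ring, `I` coincides with the largest
differential ideal contained in the maximal ideal. -/
theorem JC_eq [IsLocalRing A] (h𝔇 : ∀ D ∈ 𝔇, IsHigherDeriv D) (I : Ideal A)
    (hI : IsMaxHDiffIdeal 𝔇 I) :
    JC 𝔇 (IsLocalRing.maximalIdeal A) = (I : Set A) := by
  set m := IsLocalRing.maximalIdeal A with hm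
  have hIm : I ≤ m := IsLocalRing.le_maximalIdeal hI.1
  let J : Ideal A :=
  { carrier := JC 𝔇 m
    add_mem' := fun ha hb L hL => by rw [map_add]; exact m.add_mem (ha L hL) (hb L hL)
    zero_mem' := fun L hL => by rw [map_zero]; exact m.zero_mem
    smul_mem' := fun c a ha => by
      intro L hL
      rw [smul_eq_mul]
      exact JC_mul 𝔇 m h𝔇 L hL c a ha }
  have hIJ : I ≤ J := fun x hx L hL => hIm (Comp_mem_of_diff 𝔇 hI.2.1 L hL x hx)
  have hJm : J ≤ m := fun a ha => ha [] (by simp)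
  have hJdiff : IsHDiffIdeal 𝔇 J := fun D hD e x hx => JC_diff 𝔇 m hx hD e
  have hJI : J ≤ I := by
    by_contra hcon
    have hlt : I < J := lt_of_le_of_ne hIJ (by
      intro h
      exact hcon (le_of_eq h.symm))
    have hlt2 : J < ⊤ :=
      lt_of_le_of_lt hJm (lt_top_iff_ne_top.mpr (Ideal.IsMaximal.ne_top
        (IsLocalRing.maximalIdeal.isMaximal A)))
    exact hI.2.2 J hlt hlt2 hJdiff
  exact le_antisymm hJI hIJ

theorem gadget_exists (h𝔇 : ∀ D ∈ 𝔇, IsHigherDeriv D) {I : Ideal A}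
    (hdiff : IsHDiffIdeal 𝔇 I) :
    ∀ L : List ((ℕ → A →+ A) × ℕ), (∀ p ∈ L, p.1 ∈ 𝔇) →
      Nonempty (PSG A m I (fun x => Comp L x ∈ m)) := by
  intro L
  induction L with
  | nil => exact fun _ => ⟨PSG.base m I⟩
  | cons p L ih =>
    intro hL
    obtain ⟨G⟩ := ih fun q hq => hL q (List.mem_cons_of_mem p hq)
    have hp1 : p.1 ∈ 𝔇 := hL p List.mem_cons_self
    exact ⟨G.step ⟨p.1, h𝔇 p.1 hp1⟩ p.2 (fun e x hx => hdiff p.1 hp1 e x hx)⟩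

end CompPart

/-- The key lemma: any relation among a "minimal" generating system of `I ^ n` that lands
in `I ^ (n + 1)` has all coefficients in `I`. -/
theorem key [IsLocalRing A] (𝔇 : Set (ℕ → A →+ A)) (h𝔇 : ∀ D ∈ 𝔇, IsHigherDeriv D)
    (I : Ideal A) (hI : IsMaxHDiffIdeal 𝔇 I) (n s : ℕ) (u : Fin s → A)
    (huI : Ideal.span (Set.range u) = I ^ n)
    (hbasis : ∀ lam : Fin s → A,
      ∑ j, lam j * u j ∈ (IsLocalRing.maximalIdeal A) * I ^ n →
        ∀ j, lam j ∈ IsLocalRing.maximalIdeal A)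
    (a : Fin s → A) (hrel : ∑ j, a j * u j ∈ I ^ (n + 1)) : ∀ i, a i ∈ I := by
  classical
  set m := IsLocalRing.maximalIdeal A with hmdef
  have hIm : I ≤ m := IsLocalRing.le_maximalIdeal hI.1
  intro i
  have hJC : a i ∈ JC 𝔇 m := by
    intro L₀ hL₀
    obtain ⟨G⟩ := gadget_exists 𝔇 m h𝔇 hI.2.1 L₀ hL₀
    letI := G.cr
    letI := G.crk
    -- powers
    have h1 : Ideal.map G.Φ I ≤ G.N I :=
      Ideal.map_le_iff_le_comap.mpr fun x hx => G.hΦI x hx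
    have hp : ∀ q : ℕ, (G.N I) ^ q ≤ G.N (I ^ q) := by
      intro q
      induction q with
      | zero => rw [pow_zero, pow_zero, Ideal.one_eq_top, Ideal.one_eq_top, G.hNtop]
      | succ q ihq =>
        rw [pow_succ, pow_succ]
        exact le_trans (Ideal.mul_mono ihq le_rfl) (G.hNmul _ _)
    have hmapI : ∀ q : ℕ, ∀ x ∈ I ^ q, G.Φ x ∈ G.N (I ^ q) := by
      intro q x hx
      have h2 : G.Φ x ∈ Ideal.map G.Φ (I ^ q) := Ideal.mem_map_of_mem _ hx
      rw [Ideal.map_pow] at h2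
      exact hp q (Ideal.pow_right_mono h1 q h2)
    -- representation of Φ (u i)
    have humem : ∀ i0, u i0 ∈ I ^ n := by
      intro i0
      rw [← huI]
      exact Ideal.subset_span ⟨i0, rfl⟩
    have hΦu : ∀ i0, ∃ c : Fin s → G.R, G.Φ (u i0) = ∑ j, c j * G.ι (u j) := by
      intro i0
      refine G.hspan s u _ ?_
      rw [huI]
      exact hmapI n _ (humem i0)
    choose c hc using hΦu
    -- representation of Φ w
    set w := ∑ j, a j * u j with hwdef
    have hΦw2 : G.Φ w ∈ G.N I * G.N (I ^ n) := by
      have h3 : G.Φ w ∈ Ideal.map G.Φ I * Ideal.map G.Φ (I ^ n) := by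
        rw [← Ideal.map_mul, ← pow_succ']
        exact Ideal.mem_map_of_mem _ hrel
      exact Ideal.mul_mono h1 (le_trans (by rw [Ideal.map_pow]; exact Ideal.pow_right_mono h1 n) (hp n)) h3
    have hwrep : ∃ d : Fin s → G.R, (∀ j, d j ∈ G.N m) ∧ G.Φ w = ∑ j, d j * G.ι (u j) := by
      refine Submodule.mul_induction_on hΦw2 ?_ ?_
      · intro x hx y hy
        obtain ⟨c', hc'⟩ := G.hspan s u y (by rwa [huI])
        refine ⟨fun j => x * c' j, fun j => (G.N m).mul_mem_right _ (G.hNle hIm hx), ?_⟩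
        rw [hc', Finset.mul_sum]
        exact Finset.sum_congr rfl fun j _ => by ring
      · rintro x y ⟨d1, hd1, rfl⟩ ⟨d2, hd2, rfl⟩
        exact ⟨fun j => d1 j + d2 j, fun j => (G.N m).add_mem (hd1 j) (hd2 j),
          by rw [← Finset.sum_add_distrib]; exact Finset.sum_congr rfl fun j _ => by ring⟩
    obtain ⟨d, hdm, hd⟩ := hwrep
    -- the independence hypothesis transported
    have hv : ∀ lam : Fin s → A, ∑ j, lam j * u j = 0 → ∀ j, lam j ∈ m := by
      intro lam h
      exact hbasis lam (by rw [h]; exact Ideal.zero_mem _)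
    -- the master equation
    have hΦweq : G.Φ w = ∑ i', G.Φ (a i') * G.Φ (u i') := by
      rw [hwdef, map_sum]
      exact Finset.sum_congr rfl fun j _ => by rw [map_mul]
    have heq : ∑ j, ((∑ i', G.Φ (a i') * c i' j) - d j) * G.ι (u j) = 0 := by
      have e1 : ∑ j, (∑ i', G.Φ (a i') * c i' j) * G.ι (u j)
          = ∑ i', G.Φ (a i') * G.Φ (u i') := by
        have e0 : ∀ i', G.Φ (a i') * G.Φ (u i')
            = ∑ j, G.Φ (a i') * c i' j * G.ι (u j) := by
          intro i'
          rw [hc i', Finset.mul_sum]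
          exact Finset.sum_congr rfl fun j _ => by ring
        rw [Finset.sum_congr rfl fun i' (_ : i' ∈ Finset.univ) => e0 i', Finset.sum_comm]
        exact Finset.sum_congr rfl fun j _ => by rw [Finset.sum_mul]
      have e2 : ∀ j, ((∑ i', G.Φ (a i') * c i' j) - d j) * G.ι (u j)
          = (∑ i', G.Φ (a i') * c i' j) * G.ι (u j) - d j * G.ι (u j) := fun j => by ring
      rw [Finset.sum_congr rfl fun j (_ : j ∈ Finset.univ) => e2 j, Finset.sum_sub_distrib,
        e1, ← hΦweq, hd, sub_self]
    have hgm : ∀ j, (∑ i', G.Φ (a i') * c i' j) ∈ G.N m := by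
      have he : ∀ j, ((∑ i', G.Φ (a i') * c i' j) - d j) ∈ G.N m :=
        G.hzero s u _ hv heq
      intro j
      have := (G.N m).add_mem (he j) (hdm j)
      simpa using this
    -- pass to the residue side
    set M : Matrix (Fin s) (Fin s) G.Rk := Matrix.of fun i' j => G.π (c i' j) with hMdef
    have hvM : ∀ j, ∑ i', G.π (G.Φ (a i')) * M i' j = 0 := by
      intro j
      have h4 := (G.hπ0 _).mpr (hgm j)
      rw [map_sum] at h4
      rw [← h4]
      exact Finset.sum_congr rfl fun i' _ => by rw [map_mul]; rfl
    have hrow : ∀ i0, ∑ j, G.ρ (c i0 j) * u j = u i0 := by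
      intro i0
      have h5 := congrArg G.ρ (hc i0)
      rw [G.hρΦ, map_sum] at h5
      rw [h5]
      exact Finset.sum_congr rfl fun j _ => by rw [map_mul, G.hρι]
    have hdelta : ∀ i0 j, G.ρ (c i0 j) - (if j = i0 then 1 else 0) ∈ m := by
      intro i0 j
      refine hbasis (fun j => G.ρ (c i0 j) - if j = i0 then 1 else 0) ?_ j
      have h6 : ∑ j, (G.ρ (c i0 j) - if j = i0 then 1 else 0) * u j = 0 := by
        have : ∀ j, (G.ρ (c i0 j) - if j = i0 then 1 else 0) * u j
            = G.ρ (c i0 j) * u j - (if j = i0 then 1 else 0) * u j := fun j => by ring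
        rw [Finset.sum_congr rfl fun j (_ : j ∈ Finset.univ) => this j,
          Finset.sum_sub_distrib, hrow]
        simp [ite_mul]
      rw [h6]
      exact Ideal.zero_mem _
    have hMk : M.map G.ρk = 1 := by
      ext i0 j
      rw [Matrix.map_apply, hMdef, Matrix.of_apply, G.hρkπ, Matrix.one_apply]
      rw [(Ideal.Quotient.mk_eq_mk_iff_sub_mem _ _).mpr (hdelta i0 j)]
      by_cases h : i0 = j
      · simp [h]
      · have h' : ¬ (j = i0) := fun hh => h hh.symm
        simp [h, h']
    have hdet : IsUnit M.det := by
      apply G.hunit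
      have h7 : G.ρk M.det = (M.map G.ρk).det := by
        rw [RingHom.map_det]
        rfl
      rw [h7, hMk, Matrix.det_one]
      exact isUnit_one
    have hv0 : ∀ i', G.π (G.Φ (a i')) = 0 := by
      set v : Fin s → G.Rk := fun i' => G.π (G.Φ (a i')) with hvdef
      haveI := M.invertibleOfIsUnitDet hdet
      have hvm : Matrix.vecMul v M = 0 := by
        funext j
        rw [Matrix.vecMul, dotProduct]
        exact hvM j
      have h8 : v = 0 := by
        calc v = Matrix.vecMul v (M * ⅟M) := by rw [mul_invOf_self, Matrix.vecMul_one]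
        _ = Matrix.vecMul (Matrix.vecMul v M) ⅟M := (Matrix.vecMul_vecMul v M ⅟M).symm
        _ = 0 := by rw [hvm, Matrix.zero_vecMul]
      exact fun i' => congrFun h8 i'
    exact G.hext (a i) ((G.hπ0 _).mp (hv0 i))
  have := JC_eq 𝔇 h𝔇 I hI
  rw [← SetLike.mem_coe, ← this]
  exact hJC

end HDAux

set_option maxHeartbeats 2000000 in
open HDAux in
/-- Let `A` be a Noetherian local ring, `𝔇` a set of higher derivations of `A`, and `I` a proper
ideal of `A` which is maximally `𝔇`-differential.  Then `A` is normally flat along `I`: for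
every `n ≥ 0`, the `A/I`-module `Iⁿ/Iⁿ⁺¹` is free. -/
theorem normallyFlat_along_maxHDiffIdeal
    {A : Type*} [CommRing A] [IsNoetherianRing A] [IsLocalRing A]
    (𝔇 : Set (ℕ → A →+ A)) (h𝔇 : ∀ D ∈ 𝔇, IsHigherDeriv D)
    (I : Ideal A) (hI : IsMaxHDiffIdeal 𝔇 I) (n : ℕ) :
    Module.Free (A ⧸ I) ((↥(I ^ n)) ⧸ (I • (⊤ : Submodule A ↥(I ^ n)))) := by
  classical
  set m := IsLocalRing.maximalIdeal A with hm
  haveI hmax : m.IsMaximal := IsLocalRing.maximalIdeal.isMaximal A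
  letI : Field (A ⧸ m) := Ideal.Quotient.field m
  haveI hfin : Module.Finite A ↥(I ^ n) :=
    Module.Finite.iff_fg.mpr (IsNoetherian.noetherian _)
  -- finiteness of the residue quotient
  haveI hfinW : Module.Finite (A ⧸ m)
      ((↥(I ^ n)) ⧸ (m • (⊤ : Submodule A ↥(I ^ n)))) := by
    obtain ⟨g, hg⟩ := hfin.fg_top
    refine ⟨⟨g.image (fun x => Submodule.Quotient.mk x), ?_⟩⟩
    rw [eq_top_iff]
    rintro w -
    obtain ⟨x, rfl⟩ := Submodule.Quotient.mk_surjective _ w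
    have hx : x ∈ Submodule.span A (g : Set ↥(I ^ n)) := by rw [hg]; trivial
    refine Submodule.span_induction ?_ ?_ ?_ ?_ hx
    · intro y hy
      apply Submodule.subset_span
      rw [Finset.coe_image]
      exact Set.mem_image_of_mem _ hy
    · rw [Submodule.Quotient.mk_zero]
      exact Submodule.zero_mem _
    · intro y z _ _ hy hz
      rw [Submodule.Quotient.mk_add]
      exact Submodule.add_mem _ hy hz
    · intro a y _ hy
      rw [← Module.Quotient.mk_smul_mk]
      exact Submodule.smul_mem _ _ hy
  -- a basis of the residue quotient and its lifts
  set s := Module.finrank (A ⧸ m) ((↥(I ^ n)) ⧸ (m • (⊤ : Submodule A ↥(I ^ n)))) with hs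
  set b := Module.finBasis (A ⧸ m) ((↥(I ^ n)) ⧸ (m • (⊤ : Submodule A ↥(I ^ n)))) with hb
  choose u' hu' using fun j =>
    Submodule.Quotient.mk_surjective (m • (⊤ : Submodule A ↥(I ^ n))) (b j)
  set u : Fin s → A := fun j => ((u' j : ↥(I ^ n)) : A) with hu
  -- mk of a linear combination
  have hmks : ∀ (J : Ideal A) (t : Fin s → ↥(I ^ n)) (lam : Fin s → A),
      (Submodule.Quotient.mk (∑ j, lam j • t j) :
          (↥(I ^ n)) ⧸ (J • (⊤ : Submodule A ↥(I ^ n))))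
        = ∑ j, Ideal.Quotient.mk J (lam j) • Submodule.Quotient.mk (t j) := by
    intro J t lam
    rw [← Submodule.mkQ_apply, map_sum]
    exact Finset.sum_congr rfl fun j _ => by
      rw [Submodule.mkQ_apply, Module.Quotient.mk_smul_mk]
  -- the lifts generate I^n
  have hstep : ∀ x : ↥(I ^ n), ∃ lam : Fin s → A,
      x - ∑ j, lam j • u' j ∈ m • (⊤ : Submodule A ↥(I ^ n)) := by
    intro x
    choose lam hlam using fun j =>
      Ideal.Quotient.mk_surjective (I := m) ((b.repr (Submodule.Quotient.mk x)) j)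
    refine ⟨lam, ?_⟩
    rw [← Submodule.Quotient.mk_eq_zero, Submodule.Quotient.mk_sub, hmks m u' lam]
    have : ∀ j : Fin s, Ideal.Quotient.mk m (lam j) • Submodule.Quotient.mk (u' j)
        = (b.repr (Submodule.Quotient.mk x)) j • b j := by
      intro j
      rw [hlam j, hu' j]
    rw [Finset.sum_congr rfl fun j (_ : j ∈ Finset.univ) => this j, Module.Basis.sum_repr, sub_self]
  have hspan' : Submodule.span A (Set.range u') = ⊤ := by
    set N := Submodule.span A (Set.range u') with hN
    have hxN : ∀ lam : Fin s → A, ∑ j, lam j • u' j ∈ N := fun lam =>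
      Submodule.sum_mem _ fun j _ => Submodule.smul_mem _ _ (Submodule.subset_span ⟨j, rfl⟩)
    haveI : Module.Finite A ((↥(I ^ n)) ⧸ N) :=
      Module.Finite.of_surjective N.mkQ (Submodule.Quotient.mk_surjective N)
    have htop : (⊤ : Submodule A ((↥(I ^ n)) ⧸ N)) ≤ m • ⊤ := by
      rintro q -
      obtain ⟨x, rfl⟩ := Submodule.Quotient.mk_surjective N q
      obtain ⟨lam, hlam⟩ := hstep x
      have h1 : (Submodule.Quotient.mk x : (↥(I ^ n)) ⧸ N)
          = Submodule.Quotient.mk (x - ∑ j, lam j • u' j) := by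
        rw [Submodule.Quotient.mk_sub, (Submodule.Quotient.mk_eq_zero N).mpr (hxN lam), sub_zero]
      rw [h1]
      have h2 : Submodule.Quotient.mk (p := N) (x - ∑ j, lam j • u' j)
          ∈ Submodule.map N.mkQ (m • ⊤) := ⟨_, hlam, rfl⟩
      rw [Submodule.map_smul''] at h2
      exact Submodule.smul_mono le_rfl le_top h2
    have hbot := Submodule.eq_bot_of_le_smul_of_le_jacobson_bot m ⊤ Module.Finite.fg_top htop
      (by rw [IsLocalRing.jacobson_eq_maximalIdeal ⊥ bot_ne_top])
    rw [eq_top_iff]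
    rintro x -
    have h3 : N.mkQ x ∈ (⊤ : Submodule A ((↥(I ^ n)) ⧸ N)) := trivial
    rw [hbot, Submodule.mem_bot, Submodule.mkQ_apply, Submodule.Quotient.mk_eq_zero] at h3
    exact h3
  -- the span identity at the level of A
  have huI : Ideal.span (Set.range u) = I ^ n := by
    have h1 : Submodule.map (I ^ n : Ideal A).subtype (Submodule.span A (Set.range u'))
        = Submodule.span A (Set.range u) := by
      rw [Submodule.map_span]
      congr 1
      rw [← Set.range_comp]
      rfl
    rw [hspan', Submodule.map_subtype_top] at h1
    rw [← Ideal.submodule_span_eq]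
    exact h1.symm
  -- coercion of combinations
  have hcoe : ∀ lam : Fin s → A, ((∑ j, lam j • u' j : ↥(I ^ n)) : A) = ∑ j, lam j * u j := by
    intro lam
    have : ((∑ j, lam j • u' j : ↥(I ^ n)) : A)
        = (I ^ n : Ideal A).subtype (∑ j, lam j • u' j) := rfl
    rw [this, map_sum]
    exact Finset.sum_congr rfl fun j _ => by
      rw [map_smul]
      rfl
  have hmem_smulTop : ∀ (J : Ideal A) (y : ↥(I ^ n)),
      (y : A) ∈ J • (I ^ n : Ideal A) → y ∈ J • (⊤ : Submodule A ↥(I ^ n)) := by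
    intro J y hy
    have h2 : (y : A) ∈ Submodule.map (I ^ n : Ideal A).subtype (J • ⊤) := by
      rw [Submodule.map_smul'', Submodule.map_subtype_top]
      exact hy
    obtain ⟨z, hz, hzy⟩ := h2
    have : z = y := Subtype.ext hzy
    rwa [this] at hz
  -- independence modulo m
  have hbasis : ∀ lam : Fin s → A, ∑ j, lam j * u j ∈ m * I ^ n → ∀ j, lam j ∈ m := by
    intro lam hmem j
    have hy : (∑ j, lam j • u' j : ↥(I ^ n)) ∈ m • (⊤ : Submodule A ↥(I ^ n)) := by
      apply hmem_smulTop m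
      rw [hcoe, Ideal.smul_eq_mul]
      exact hmem
    have h0 := (Submodule.Quotient.mk_eq_zero _).mpr hy
    rw [hmks m u' lam] at h0
    have h1 : ∀ j, Ideal.Quotient.mk m (lam j) = 0 := by
      apply Fintype.linearIndependent_iff.mp b.linearIndependent
      rw [← h0]
      exact Finset.sum_congr rfl fun j _ => by rw [hu' j]
    exact Ideal.Quotient.eq_zero_iff_mem.mp (h1 j)
  -- the key lemma
  have hkey : ∀ lam : Fin s → A, ∑ j, lam j * u j ∈ I ^ (n + 1) → ∀ j, lam j ∈ I :=
    fun lam h => HDAux.key 𝔇 h𝔇 I hI n s u huI hbasis lam h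
  -- construct the basis of I^n / I * I^n over A / I
  have li : LinearIndependent (A ⧸ I) (fun j => (Submodule.Quotient.mk (u' j) :
      (↥(I ^ n)) ⧸ (I • (⊤ : Submodule A ↥(I ^ n))))) := by
    rw [Fintype.linearIndependent_iff]
    intro g hg j
    choose lam hlam using fun j => Ideal.Quotient.mk_surjective (I := I) (g j)
    have h0 : (Submodule.Quotient.mk (∑ j, lam j • u' j) :
        (↥(I ^ n)) ⧸ (I • (⊤ : Submodule A ↥(I ^ n)))) = 0 := by
      rw [hmks I u' lam]
      rw [Finset.sum_congr rfl fun j (_ : j ∈ Finset.univ) => by rw [hlam j]]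
      exact hg
    rw [Submodule.Quotient.mk_eq_zero] at h0
    have h2 : ∑ j, lam j * u j ∈ I ^ (n + 1) := by
      have h3 : ((∑ j, lam j • u' j : ↥(I ^ n)) : A)
          ∈ Submodule.map (I ^ n : Ideal A).subtype (I • ⊤) := ⟨_, h0, rfl⟩
      rw [Submodule.map_smul'', Submodule.map_subtype_top, Ideal.smul_eq_mul] at h3
      rw [← hcoe]
      rw [pow_succ]
      rwa [mul_comm] at h3
    have h4 := hkey lam h2 j
    rw [← hlam j]
    exact Ideal.Quotient.eq_zero_iff_mem.mpr h4
  have hsp : ⊤ ≤ Submodule.span (A ⧸ I) (Set.range (fun j => (Submodule.Quotient.mk (u' j) :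
      (↥(I ^ n)) ⧸ (I • (⊤ : Submodule A ↥(I ^ n)))))) := by
    rintro q -
    obtain ⟨x, rfl⟩ := Submodule.Quotient.mk_surjective _ q
    have hx : x ∈ Submodule.span A (Set.range u') := by rw [hspan']; trivial
    obtain ⟨lam, hlam⟩ := (Submodule.mem_span_range_iff_exists_fun A).mp hx
    rw [← hlam, hmks I u' lam]
    exact Submodule.sum_mem _ fun j _ =>
      Submodule.smul_mem _ _ (Submodule.subset_span ⟨j, rfl⟩)
  exact Module.Free.of_basis (Module.Basis.mk li hsp)
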